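/- Let G be the join of two finite simple graphs G_1 and G_2, each having at least 2 vertices. Then G does not have a unique perfect matching; that is, either G has no perfect matching or G has at least two distinct perfect matchings. -/

import Mathlib

/-- The join of two vertex-disjoint graphs: keep the edges of both graphs, and add
all edges between the two vertex sets. -/
def GraphJoin {V₁ V₂ : Type*} (G₁ : SimpleGraph V₁) (G₂ : SimpleGraph V₂) :
    SimpleGraph (V₁ ⊕ V₂) :=
  SimpleGraph.fromRel fun a b =>
    match a, b with
    | Sum.inl a, Sum.inl b => G₁.Adj a b
    | Sum.inr a, Sum.inr b => G₂.Adj a b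
    | _, _ => True

lemma pm_of_involutive {V : Type*} (G : SimpleGraph V) (f : V → V)
    (hf : Function.Involutive f) (hadj : ∀ v, G.Adj v (f v)) :
    ∃ M : G.Subgraph, M.IsPerfectMatching ∧ ∀ a b, M.Adj a b ↔ f a = b := by
  refine ⟨{ verts := Set.univ,
            Adj := fun a b => f a = b,
            adj_sub := ?_, edge_vert := ?_, symm := ?_ }, ?_, ?_⟩
  · rintro a b rfl; exact hadj a
  · intro a b _; trivial
  · constructor; rintro a b rfl; exact hf a
  · exact ⟨fun v _ => ⟨f v, rfl, fun y hy => Eq.symm (hy : f v = y)⟩, fun v => trivial⟩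
  · intro a b; rfl

theorem join_no_unique_perfect_matching {V₁ V₂ : Type*} [Fintype V₁] [Fintype V₂]
    (G₁ : SimpleGraph V₁) (G₂ : SimpleGraph V₂)
    (h₁ : 2 ≤ Fintype.card V₁) (h₂ : 2 ≤ Fintype.card V₂) :
    ¬ ∃! M : (GraphJoin G₁ G₂).Subgraph, M.IsPerfectMatching := by
  classical
  rintro ⟨M, hM, huniq⟩
  have hmatch : ∀ v, ∃! w, M.Adj v w := fun v => hM.1 (hM.2 v)
  set f : V₁ ⊕ V₂ → V₁ ⊕ V₂ := fun v => (hmatch v).choose with hfdef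
  have hfadj : ∀ v, M.Adj v (f v) := fun v => (hmatch v).choose_spec.1
  have hfuniq : ∀ v w, M.Adj v w → w = f v := fun v w h => (hmatch v).choose_spec.2 w h
  have hfinv : Function.Involutive f := fun v => (hfuniq (f v) v (hfadj v).symm).symm
  have hfne : ∀ v, f v ≠ v := fun v h => (hfadj v).ne h.symm
  have hcross : ∀ (a : V₁) (b : V₂), (GraphJoin G₁ G₂).Adj (Sum.inl a) (Sum.inr b) := by
    intro a b
    simp [GraphJoin, SimpleGraph.fromRel_adj]
  have key : ∃ p q, p ≠ q ∧ p ≠ f q ∧ f p ≠ q ∧ f p ≠ f q ∧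
      (GraphJoin G₁ G₂).Adj p q ∧ (GraphJoin G₁ G₂).Adj (f p) (f q) := by
    by_cases hA : ∃ a a' : V₁, a ≠ a' ∧ (∃ b, f (Sum.inl a) = Sum.inr b) ∧
        (∃ b', f (Sum.inl a') = Sum.inr b')
    · obtain ⟨a, a', hne, ⟨b, hb⟩, ⟨b', hb'⟩⟩ := hA
      refine ⟨Sum.inl a, Sum.inr b', ?_, ?_, ?_, ?_, ?_, ?_⟩
      · simp
      · have : f (Sum.inr b') = Sum.inl a' := by rw [← hb', hfinv]
        rw [this]; simp [hne]
      · intro h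
        exact hne (Sum.inl.inj (hfinv.injective (h.trans hb'.symm)))
      · have : f (Sum.inr b') = Sum.inl a' := by rw [← hb', hfinv]
        rw [hb, this]; simp
      · exact hcross a b'
      · have : f (Sum.inr b') = Sum.inl a' := by rw [← hb', hfinv]
        rw [hb, this]; exact (hcross a' b).symm
    · -- at most one cross edge from V₁; find internal edges on both sides
      have hV1 : ∃ a a'', f (Sum.inl a) = Sum.inl a'' := by
        obtain ⟨a₁, a₂, h12⟩ := Fintype.exists_pair_of_one_lt_card (by omega) (α := V₁)
        rcases hc1 : f (Sum.inl a₁) with a'' | c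
        · exact ⟨a₁, a'', hc1⟩
        · rcases hc2 : f (Sum.inl a₂) with a'' | c'
          · exact ⟨a₂, a'', hc2⟩
          · exact absurd ⟨a₁, a₂, h12, ⟨c, hc1⟩, ⟨c', hc2⟩⟩ hA
      have hV2 : ∃ b b'', f (Sum.inr b) = Sum.inr b'' := by
        obtain ⟨b₁, b₂, h12⟩ := Fintype.exists_pair_of_one_lt_card (by omega) (α := V₂)
        rcases hc1 : f (Sum.inr b₁) with c | b''
        · rcases hc2 : f (Sum.inr b₂) with c' | b''
          · exfalso
            have hcb1 : f (Sum.inl c) = Sum.inr b₁ := by rw [← hc1, hfinv]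
            have hcb2 : f (Sum.inl c') = Sum.inr b₂ := by rw [← hc2, hfinv]
            have hcc : c ≠ c' := by
              rintro rfl
              exact h12 (by simpa using hcb1.symm.trans hcb2)
            exact hA ⟨c, c', hcc, ⟨b₁, hcb1⟩, ⟨b₂, hcb2⟩⟩
          · exact ⟨b₂, b'', hc2⟩
        · exact ⟨b₁, b'', hc1⟩
      obtain ⟨a, a'', ha⟩ := hV1
      obtain ⟨b, b'', hb⟩ := hV2
      refine ⟨Sum.inl a, Sum.inr b, by simp, ?_, ?_, ?_, hcross a b, ?_⟩
      · rw [hb]; simp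
      · rw [ha]; simp
      · rw [ha, hb]; simp
      · rw [ha, hb]; exact hcross a'' b''
  obtain ⟨p, q, hpq, hpfq, hfpq, hfpfq, hadjpq, hadjf⟩ := key
  set g : V₁ ⊕ V₂ → V₁ ⊕ V₂ := fun v =>
    if v = p then q else if v = q then p else if v = f p then f q
    else if v = f q then f p else f v with hgdef
  have hginv : Function.Involutive g := by
    intro v
    by_cases h1 : v = p
    · subst h1; simp [g, Ne.symm hpq]
    by_cases h2 : v = q
    · subst h2; simp [g, Ne.symm hpq]
    by_cases h3 : v = f p
    · subst h3
      simp [g, hfne p, hfpq, Ne.symm hpfq, hfne q, Ne.symm hfpfq]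
    by_cases h4 : v = f q
    · subst h4
      simp [g, Ne.symm hpfq, hfne q, Ne.symm hfpfq, hfne p, hfpq]
    · have e1 : f v ≠ p := fun h => h3 (by rw [← h, hfinv v])
      have e2 : f v ≠ q := fun h => h4 (by rw [← h, hfinv v])
      have e3 : f v ≠ f p := fun h => h1 (hfinv.injective h)
      have e4 : f v ≠ f q := fun h => h2 (hfinv.injective h)
      simp [g, h1, h2, h3, h4, e1, e2, e3, e4, hfinv v]
  have hgadj : ∀ v, (GraphJoin G₁ G₂).Adj v (g v) := by
    intro v
    by_cases h1 : v = p
    · subst h1; simpa [g] using hadjpq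
    by_cases h2 : v = q
    · subst h2; simpa [g, Ne.symm hpq] using hadjpq.symm
    by_cases h3 : v = f p
    · subst h3; simpa [g, hfne p, hfpq] using hadjf
    by_cases h4 : v = f q
    · subst h4
      simpa [g, Ne.symm hpfq, hfne q, Ne.symm hfpfq] using hadjf.symm
    · simpa [g, h1, h2, h3, h4] using M.adj_sub (hfadj v)
  obtain ⟨M', hM', hM'adj⟩ := pm_of_involutive _ g hginv hgadj
  have hMM : M' = M := huniq M' hM'
  have hMpq : M.Adj p q := by
    rw [← hMM]
    exact (hM'adj p q).mpr (by simp [g])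
  exact hfpq (hfuniq p q hMpq).symm
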